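/- For all integers N > 1, K > 1, and M with 1 ≤ M ≤ K−1, if M+1 divides K, then R = R*, where R := (N−1)/(N − P_0) with P_0 := (1 + ∑_{k=1}^{g−1} r_k (N−1)^k)^{−1}, and R* := (N^g − N^{g−1})/(N^g − 1). -/

import Mathlib

open Finset

/-- `g := ⌈K/(M+1)⌉`, the ceiling of the exact rational quotient `K/(M+1)`. -/
def gVal (K M : ℕ) : ℕ := ⌈(K : ℚ) / (M + 1)⌉₊

/-- `r_k := ∏_{j=1}^{k} (K/(M+1) − j)/j` as a rational number. -/
def rVal (K M : ℕ) (k : ℕ) : ℚ :=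
  ∏ j ∈ Finset.Icc 1 k, ((K : ℚ) / (M + 1) - (j : ℚ)) / (j : ℚ)

/-- `P_0 := (1 + ∑_{k=1}^{g−1} r_k (N−1)^k)⁻¹`. -/
def P0Val (N K M : ℕ) : ℚ :=
  (1 + ∑ k ∈ Finset.Icc 1 (gVal K M - 1), rVal K M k * ((N : ℚ) - 1) ^ k)⁻¹

/-- `R := (N−1)/(N − P_0)`. -/
def RVal (N K M : ℕ) : ℚ := ((N : ℚ) - 1) / ((N : ℚ) - P0Val N K M)

/-- `R* := (N^g − N^{g−1})/(N^g − 1)`. -/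
def RstarVal (N K M : ℕ) : ℚ :=
  ((N : ℚ) ^ gVal K M - (N : ℚ) ^ (gVal K M - 1)) / ((N : ℚ) ^ gVal K M - 1)

/-- if `M+1` divides `K` then `R = R*`. -/
theorem rate_eq_Rstar_of_dvd (N K M : ℕ) (hN : 1 < N) (hK : 1 < K)
    (hM1 : 1 ≤ M) (hM2 : M ≤ K - 1) (hdvd : (M + 1) ∣ K) :
    RVal N K M = RstarVal N K M := by
  obtain ⟨g, hg⟩ := hdvd
  have hg1 : 1 ≤ g := by
    rcases Nat.eq_zero_or_pos g with h | h
    · subst h; simp at hg; omega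
    · exact h
  have hq : (K : ℚ) / (M + 1) = g := by
    rw [hg]; push_cast
    rw [mul_comm, mul_div_assoc, div_self (by positivity), mul_one]
  have hgval : gVal K M = g := by
    unfold gVal; rw [hq, Nat.ceil_natCast]
  -- r_k = choose (g-1) k for k ≤ g-1
  have hr : ∀ k, k ≤ g - 1 → rVal K M k = ((g - 1).choose k : ℚ) := by
    intro k
    induction k with
    | zero => intro _; simp [rVal]
    | succ k ih =>
      intro hk
      have hk' : k ≤ g - 1 := by omega
      have hstep : rVal K M (k + 1) = rVal K M k * (((g : ℚ) - (k + 1)) / (k + 1)) := by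
        unfold rVal
        rw [Finset.prod_Icc_succ_top (by omega : 1 ≤ k + 1), hq]
        push_cast; ring
      rw [hstep, ih hk']
      have hc := Nat.choose_succ_right_eq (g - 1) k
      have hcast : ((g - 1).choose (k + 1) : ℚ) * (k + 1) =
          ((g - 1).choose k : ℚ) * ((g : ℚ) - (k + 1)) := by
        have := congrArg (Nat.cast : ℕ → ℚ) hc
        push_cast [Nat.cast_sub (show k ≤ g - 1 from hk'),
          Nat.cast_sub (show 1 ≤ g from hg1)] at this
        rw [this]; ring
      have hk1 : ((k : ℚ) + 1) ≠ 0 := by positivity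
      field_simp
      linarith [hcast]
  -- the binomial sum
  have hsum : 1 + ∑ k ∈ Finset.Icc 1 (g - 1), rVal K M k * ((N : ℚ) - 1) ^ k
      = (N : ℚ) ^ (g - 1) := by
    have h1 : ∑ k ∈ Finset.Icc 1 (g - 1), rVal K M k * ((N : ℚ) - 1) ^ k
        = ∑ k ∈ Finset.Icc 1 (g - 1), ((g - 1).choose k : ℚ) * ((N : ℚ) - 1) ^ k := by
      apply Finset.sum_congr rfl
      intro k hk
      rw [hr k (Finset.mem_Icc.mp hk).2]
    rw [h1]
    have hbin : ((N : ℚ) - 1 + 1) ^ (g - 1)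
        = ∑ k ∈ Finset.range (g - 1 + 1), ((g - 1).choose k : ℚ) * ((N : ℚ) - 1) ^ k := by
      rw [add_pow]
      apply Finset.sum_congr rfl
      intro k _
      ring
    have h2 : ∑ k ∈ Finset.range (g - 1 + 1), ((g - 1).choose k : ℚ) * ((N : ℚ) - 1) ^ k
        = 1 + ∑ k ∈ Finset.Icc 1 (g - 1), ((g - 1).choose k : ℚ) * ((N : ℚ) - 1) ^ k := by
      rw [Finset.range_eq_Ico, Finset.sum_eq_sum_Ico_succ_bot (by omega)]
      simp [Finset.Ico_add_one_right_eq_Icc]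
    have : ((N : ℚ) - 1 + 1) = (N : ℚ) := by ring
    rw [this] at hbin
    rw [h2] at hbin
    linarith [hbin]
  have hP0 : P0Val N K M = ((N : ℚ) ^ (g - 1))⁻¹ := by
    unfold P0Val
    rw [hgval, hsum]
  -- final computation
  unfold RVal RstarVal
  rw [hgval, hP0]
  have hN2 : (2 : ℚ) ≤ (N : ℚ) := by exact_mod_cast hN
  have hNpos : (0 : ℚ) < (N : ℚ) := by linarith
  have hpow : (0 : ℚ) < (N : ℚ) ^ (g - 1) := by positivity
  have hpow1 : (1 : ℚ) ≤ (N : ℚ) ^ (g - 1) := one_le_pow₀ (by linarith)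
  have hg' : g = (g - 1) + 1 := by omega
  have hden1 : (N : ℚ) - ((N : ℚ) ^ (g - 1))⁻¹ ≠ 0 := by
    have : ((N : ℚ) ^ (g - 1))⁻¹ ≤ 1 := by
      rw [inv_le_one_iff₀]; right; exact hpow1
    nlinarith
  have hden2 : (N : ℚ) ^ g - 1 ≠ 0 := by
    have : (1 : ℚ) < (N : ℚ) ^ g := one_lt_pow₀ (by linarith) (by omega)
    linarith
  rw [hg', div_eq_div_iff (by rw [← hg'] at *; exact hden1) (by rw [← hg'] at *; exact hden2)]
  rw [pow_succ]
  simp only [Nat.add_sub_cancel]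
  field_simp
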